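/- For all i ∈ [d] and j ∈ [N/d], ms(ℓ_{i,j}, ℓ_{i,j+1}) ≥ n_1 − 1, where ℓ_{i,N/d} := ℓ_{i,0}. Equivalently, in the sequence consisting of the last n_1 − 2 edges of ℓ_{i,j} followed by the first n_1 − 2 edges of ℓ_{i,j+1}, any n_1 − 1 consecutive edges form a matching (no two of them agree in any coordinate). -/

import Mathlib

/-- `⟨x*⟩`: the edge of `K_{n_1,…,n_k}` (with edge set `∏ l, Z_{m l} × Z_{n l / m l}`)
whose `l`-th entry is `(x_{l,1}, x_{l,2})`, where `x = x_{l,1}·(n l / m l) + x_{l,2}`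
with `x_{l,1} ∈ [m l]` and `x_{l,2} ∈ [n l / m l]`. -/
def xStar (k : ℕ) (n m : Fin k → ℕ) (x : ℕ) :
    ∀ l : Fin k, ZMod (m l) × ZMod (n l / m l) :=
  fun l => (((x / (n l / m l) : ℕ) : ZMod (m l)), ((x : ℕ) : ZMod (n l / m l)))

/-- `⟨(i,j)⟩`: the edge whose first entry is `(0,0)` and whose `l`-th entry
(`l ≥ 1`) is `(i_l, j_l)`, the `l`-th mixed-radix digits of `i` in base
`(m 1, …, m (k-1))` and of `j` in base `(n 1 / m 1, …, n (k-1) / m (k-1))`. -/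
def baseEdge (k : ℕ) (n m : Fin k → ℕ) (i j : ℕ) :
    ∀ l : Fin k, ZMod (m l) × ZMod (n l / m l) :=
  fun l =>
    if (l : ℕ) = 0 then (0, 0)
    else (((i / ∏ h ∈ Finset.univ.filter (fun h : Fin k => l < h), m h : ℕ) : ZMod (m l)),
          ((j / ∏ h ∈ Finset.univ.filter (fun h : Fin k => l < h), (n h / m h) : ℕ) :
            ZMod (n l / m l)))

private lemma pairInj (M B x x' : ℕ) (hx : x < M * B) (hx' : x' < M * B)
    (h1 : ((x / B : ℕ) : ZMod M) = ((x' / B : ℕ) : ZMod M))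
    (h2 : ((x : ℕ) : ZMod B) = ((x' : ℕ) : ZMod B)) : x = x' := by
  have hB : 0 < B := by
    rcases Nat.eq_zero_or_pos B with h | h
    · subst h; simp at hx
    · exact h
  have hM : 0 < M := by
    rcases Nat.eq_zero_or_pos M with h | h
    · subst h; simp at hx
    · exact h
  have hlt : x / B < M := (Nat.div_lt_iff_lt_mul hB).mpr hx
  have hlt' : x' / B < M := (Nat.div_lt_iff_lt_mul hB).mpr hx'
  have hd1 : x / B = x' / B := by
    have h := (ZMod.natCast_eq_natCast_iff _ _ _).mp h1
    unfold Nat.ModEq at h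
    rwa [Nat.mod_eq_of_lt hlt, Nat.mod_eq_of_lt hlt'] at h
  have hd2 : x % B = x' % B := (ZMod.natCast_eq_natCast_iff _ _ _).mp h2
  calc x = B * (x / B) + x % B := (Nat.div_add_mod x B).symm
    _ = B * (x' / B) + x' % B := by rw [hd1, hd2]
    _ = x' := Nat.div_add_mod x' B

private lemma epsLemma (B P Nd j : ℕ) (hj : j < Nd) (hB : B ∣ Nd / P) :
    ∃ ε ≤ 1, ((((j + 1) % Nd) / P : ℕ) : ZMod B) = ((j / P + ε : ℕ) : ZMod B) := by
  have hsucc : (j + 1) / P = j / P + if P ∣ j + 1 then 1 else 0 := Nat.succ_div (a := j) (b := P)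
  refine ⟨if P ∣ j + 1 then 1 else 0, by split <;> omega, ?_⟩
  rw [← hsucc]
  rcases Nat.lt_or_ge (j + 1) Nd with h | h
  · rw [Nat.mod_eq_of_lt h]
  · have hEq : j + 1 = Nd := by omega
    have h0 : (j + 1) % Nd = 0 := by rw [hEq]; exact Nat.mod_self Nd
    rw [h0, Nat.zero_div, hEq]
    obtain ⟨t, ht⟩ := hB
    rw [ht]
    push_cast
    simp


/-- Lemma: `ms(ℓ_{i,j}, ℓ_{i,j+1}) ≥ n_1 - 1` (with `ℓ_{i,N/d} := ℓ_{i,0}`), where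
`ℓ_{i,j}(⟨x*⟩ + ⟨(i,j)⟩) = x`.  Concretely: `c` is the sequence consisting of the
last `n_1 - 2` edges of `ℓ_{i,j}` (i.e. `⟨x*⟩ + ⟨(i,j)⟩` for `x = 2, …, n_1 - 1`)
followed by the first `n_1 - 2` edges of `ℓ_{i,j+1}`, and any `n_1 - 1` consecutive
edges of `c` form a matching: no two of them agree in any coordinate. -/
theorem matchingMij_consecutive_matching
    (k : ℕ) (hk : 2 ≤ k) (n m : Fin k → ℕ)
    (hpos : ∀ i, 1 ≤ n i)
    (hmono : ∀ i j : Fin k, i ≤ j → n i ≤ n j)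
    (hm0 : m ⟨0, by omega⟩ = n ⟨0, by omega⟩)
    (hdvd : ∀ i, m i ∣ n i)
    (N d : ℕ)
    (hN : N = ∏ i ∈ Finset.univ.filter (fun i : Fin k => (i : ℕ) ≠ 0), n i)
    (hd : d = ∏ i ∈ Finset.univ.filter (fun i : Fin k => (i : ℕ) ≠ 0), m i)
    (n1 : ℕ) (hn1 : n1 = n ⟨0, by omega⟩)
    (i j : ℕ) (hi : i < d) (hj : j < N / d)
    (c : ℕ → (∀ l : Fin k, ZMod (m l) × ZMod (n l / m l)))
    (hc : ∀ q, c q =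
      if q < n1 - 2 then xStar k n m (q + 2) + baseEdge k n m i j
      else xStar k n m (q - (n1 - 2)) + baseEdge k n m i ((j + 1) % (N / d))) :
    ∀ p, p + (n1 - 1) ≤ 2 * (n1 - 2) →
      ∀ q q', p ≤ q → q < p + (n1 - 1) → p ≤ q' → q' < p + (n1 - 1) → q ≠ q' →
        ∀ l : Fin k, c q l ≠ c q' l := by
  intro p hp q q' hpq hqlt hpq' hqlt' hne l heq
  have hn13 : 3 ≤ n1 := by omega
  -- per-coordinate facts
  have hmlpos : 0 < m l := Nat.pos_of_dvd_of_pos (hdvd l) (hpos l)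
  have hnl : n l = m l * (n l / m l) := (Nat.mul_div_cancel' (hdvd l)).symm
  have hBpos : 0 < n l / m l :=
    Nat.div_pos (Nat.le_of_dvd (hpos l) (hdvd l)) hmlpos
  have hn1le : n1 ≤ m l * (n l / m l) := by
    rw [← hnl, hn1]
    exact hmono _ l (by rw [Fin.le_def]; exact Nat.zero_le _)
  have key : ∀ x x' : ℕ, x < n1 → x' < n1 →
      xStar k n m x l = xStar k n m x' l → x = x' := by
    intro x x' hx hx' h
    exact pairInj (m l) (n l / m l) x x' (lt_of_lt_of_le hx hn1le)
      (lt_of_lt_of_le hx' hn1le) (congrArg Prod.fst h) (congrArg Prod.snd h)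
  -- the mixed-block case as a helper
  have mixed : ∀ a b : ℕ, a < n1 - 2 → ¬ b < n1 - 2 → b ≤ a + (n1 - 2) →
      (xStar k n m (a + 2) + baseEdge k n m i j) l ≠
      (xStar k n m (b - (n1 - 2)) + baseEdge k n m i ((j + 1) % (N / d))) l := by
    intro a b ha hb hab h
    set x : ℕ := a + 2 with hxdef
    set x' : ℕ := b - (n1 - 2) with hx'def
    have hxlt : x < n1 := by omega
    have hx'lt : x' < n1 := by omega
    have hxx' : x' + 2 ≤ x := by omega
    by_cases hl0 : (l : ℕ) = 0
    · -- base edges agree at coordinate 0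
      have hbe : baseEdge k n m i j l = baseEdge k n m i ((j + 1) % (N / d)) l := by
        simp [baseEdge, hl0]
      rw [Pi.add_apply, Pi.add_apply, hbe] at h
      have := key x x' hxlt hx'lt (add_right_cancel h)
      omega
    · -- coordinate l ≥ 1
      set B : ℕ := n l / m l with hBdef
      set P : ℕ := ∏ h ∈ Finset.univ.filter (fun h : Fin k => l < h), (n h / m h) with hPdef
      -- divisibility fact: B ∣ (N/d)/P
      have hBdvd : B ∣ (N / d) / P := by
        set S : Finset (Fin k) := Finset.univ.filter (fun i : Fin k => (i : ℕ) ≠ 0) with hS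
        set T : Finset (Fin k) := Finset.univ.filter (fun h : Fin k => l < h) with hT
        have hTS : T ⊆ S := by
          intro h hh
          simp only [hT, hS, Finset.mem_filter, Finset.mem_univ, true_and] at hh ⊢
          have := hh
          rw [Fin.lt_def] at this
          omega
        have hdpos : 0 < d := by
          rw [hd]; exact Finset.prod_pos (fun t _ => Nat.pos_of_dvd_of_pos (hdvd t) (hpos t))
        have hNd : N / d = ∏ h ∈ S, (n h / m h) := by
          have hNfac : N = d * ∏ h ∈ S, (n h / m h) := by
            rw [hN, hd, ← Finset.prod_mul_distrib]
            exact Finset.prod_congr rfl fun t _ => (Nat.mul_div_cancel' (hdvd t)).symm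
          rw [hNfac, Nat.mul_div_cancel_left _ hdpos]
        have hsplit : ∏ h ∈ S, (n h / m h) = (∏ h ∈ S \ T, (n h / m h)) * P := by
          rw [hPdef, ← Finset.prod_sdiff hTS]
        have hPpos : 0 < P := by
          rw [hPdef]
          exact Finset.prod_pos fun t _ => by
            have := hpos t
            have := Nat.pos_of_dvd_of_pos (hdvd t) (hpos t)
            have := Nat.le_of_dvd (hpos t) (hdvd t)
            exact Nat.div_pos this (by omega)
        have hquot : (N / d) / P = ∏ h ∈ S \ T, (n h / m h) := by
          rw [hNd, hsplit, Nat.mul_div_cancel _ hPpos]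
        rw [hquot]
        apply Finset.dvd_prod_of_mem
        simp only [Finset.mem_sdiff, hS, hT, Finset.mem_filter, Finset.mem_univ, true_and]
        exact ⟨hl0, lt_irrefl l⟩
      obtain ⟨ε, hε, hcast⟩ := epsLemma B P (N / d) j hj hBdvd
      -- unpack equality of both components
      rw [Pi.add_apply, Pi.add_apply] at h
      simp only [xStar, baseEdge, if_neg hl0, Prod.mk_add_mk, Prod.mk.injEq] at h
      obtain ⟨hF, hS2⟩ := h
      have hF' : ((x / B : ℕ) : ZMod (m l)) = ((x' / B : ℕ) : ZMod (m l)) :=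
        add_right_cancel hF
      rw [hcast] at hS2
      have h2' : ((x : ℕ) : ZMod B) = ((x' + ε : ℕ) : ZMod B) := by
        push_cast at hS2 ⊢
        linear_combination hS2
      have hmod := (ZMod.natCast_eq_natCast_iff _ _ _).mp h2'
      have hdvdB : B ∣ x - (x' + ε) := (Nat.modEq_iff_dvd' (by omega)).mp hmod.symm
      have hge : x' + B ≤ x := by
        have : B ≤ x - (x' + ε) := Nat.le_of_dvd (by omega) hdvdB
        omega
      have hltM : x / B < m l := (Nat.div_lt_iff_lt_mul hBpos).mpr (lt_of_lt_of_le hxlt hn1le)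
      have hltM' : x' / B < m l := (Nat.div_lt_iff_lt_mul hBpos).mpr (lt_of_lt_of_le hx'lt hn1le)
      have hgtdiv : x' / B < x / B := by
        have h1 : (x' + B) / B ≤ x / B := Nat.div_le_div_right hge
        rw [Nat.add_div_right _ hBpos] at h1
        omega
      have hdeq : x / B = x' / B := by
        have hmm := (ZMod.natCast_eq_natCast_iff _ _ _).mp hF'
        unfold Nat.ModEq at hmm
        rwa [Nat.mod_eq_of_lt hltM, Nat.mod_eq_of_lt hltM'] at hmm
      omega
  -- now the case split
  rw [hc q, hc q'] at heq
  split_ifs at heq with h1 h2 h2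
  · -- both in first block
    rw [Pi.add_apply, Pi.add_apply] at heq
    have := key (q + 2) (q' + 2) (by omega) (by omega) (add_right_cancel heq)
    omega
  · exact mixed q q' h1 h2 (by omega) heq
  · exact mixed q' q h2 h1 (by omega) heq.symm
  · -- both in second block
    rw [Pi.add_apply, Pi.add_apply] at heq
    have := key (q - (n1 - 2)) (q' - (n1 - 2)) (by omega) (by omega) (add_right_cancel heq)
    omega
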